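/- arXiv:1307.0977 — 2 statements merged into one kernel-verified Lean document; each statement's English description precedes it below -/
import Mathlib

section
/- Let α ∈ {a,b}^{2m} (m ≥ 1) satisfy α_{2j} ≠ α_{2j+1} for all 1 ≤ j < m, and define k(α) = #{ j ≤ m : α_{2j-1} = α_{2j} = a } − #{ j ≤ m : α_{2j-1} = α_{2j} = b }. Then: k(α) = 1 if α_1 = α_{2m} = a; k(α) = −1 if α_1 = α_{2m} = b; and k(α) = 0 if α_1 ≠ α_{2m}. -/
/-- `k(α)`: for a sequence `α = (α_1, …, α_{2m})` with entries in `{a, b}`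
(`a = true`, `b = false`), the number of indices `1 ≤ j ≤ m` with
`α_{2j-1} = α_{2j} = a` minus the number with `α_{2j-1} = α_{2j} = b`. -/
def kval (m : ℕ) (α : ℕ → Bool) : ℤ :=
  (((Finset.Icc 1 m).filter fun j => α (2 * j - 1) = true ∧ α (2 * j) = true).card : ℤ) -
  (((Finset.Icc 1 m).filter fun j => α (2 * j - 1) = false ∧ α (2 * j) = false).card : ℤ)

lemma kval_eq_sum (m : ℕ) (α : ℕ → Bool) :
    kval m α = ∑ j ∈ Finset.Icc 1 m,
      ((if α (2 * j - 1) = true ∧ α (2 * j) = true then (1:ℤ) else 0) -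
       (if α (2 * j - 1) = false ∧ α (2 * j) = false then (1:ℤ) else 0)) := by
  simp only [kval, Finset.card_filter, Nat.cast_sum, apply_ite (Nat.cast : ℕ → ℤ),
    ← Finset.sum_sub_distrib, Nat.cast_one, Nat.cast_zero]

lemma kval_succ (m : ℕ) (α : ℕ → Bool) (hm : 1 ≤ m) :
    kval (m+1) α = kval m α +
      ((if α (2 * (m+1) - 1) = true ∧ α (2 * (m+1)) = true then (1:ℤ) else 0) -
       (if α (2 * (m+1) - 1) = false ∧ α (2 * (m+1)) = false then (1:ℤ) else 0)) := by
  rw [kval_eq_sum, kval_eq_sum, Finset.sum_Icc_succ_top (by omega : 1 ≤ m + 1)]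

lemma kval_formula (m : ℕ) (hm : 1 ≤ m) (α : ℕ → Bool)
    (hjunction : ∀ j : ℕ, 1 ≤ j → j < m → α (2 * j) ≠ α (2 * j + 1)) :
    kval m α = (if α 1 = true then 1 else 0) + (if α (2 * m) = true then 1 else 0) - 1 := by
  induction m with
  | zero => omega
  | succ n ih =>
    rcases Nat.eq_or_lt_of_le hm with h | h
    · have : n = 0 := by omega
      subst this
      rw [kval_eq_sum]
      simp only [Finset.Icc_self, Finset.sum_singleton]
      norm_num
      cases h1 : α 1 <;> cases h2 : α 2 <;> simp [h1, h2]
    · have hn : 1 ≤ n := by omega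
      have hj : α (2 * n) ≠ α (2 * n + 1) := hjunction n hn (by omega)
      rw [kval_succ n α hn, ih hn (fun j h1 h2 => hjunction j h1 (by omega))]
      have e1 : 2 * (n + 1) - 1 = 2 * n + 1 := by omega
      rw [e1]
      cases h1 : α 1 <;> cases h2 : α (2 * n) <;> cases h3 : α (2 * (n+1)) <;>
        simp [h1, h2, h3] at hj ⊢ <;> simp [hj]

/-- If `α ∈ {a,b}^{2m}` satisfies `α_{2j} ≠ α_{2j+1}` for all `1 ≤ j < m`, then
`k(α) = 1` if `α_1 = α_{2m} = a`, `k(α) = -1` if `α_1 = α_{2m} = b`, and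
`k(α) = 0` if `α_1 ≠ α_{2m}`. -/
theorem kval_boundary_values (m : ℕ) (hm : 1 ≤ m) (α : ℕ → Bool)
    (hjunction : ∀ j : ℕ, 1 ≤ j → j < m → α (2 * j) ≠ α (2 * j + 1)) :
    (α 1 = true → α (2 * m) = true → kval m α = 1) ∧
    (α 1 = false → α (2 * m) = false → kval m α = -1) ∧
    (α 1 ≠ α (2 * m) → kval m α = 0) := by
  have h := kval_formula m hm α hjunction
  refine ⟨fun h1 h2 => ?_, fun h1 h2 => ?_, fun h1 => ?_⟩ <;>
    cases hb : α 1 <;> cases hc : α (2 * m) <;> simp_all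
end

section
/- Let D = { (i, i+j) : i ∈ ℤ[1/3], j ∈ ℤ } ⊆ ℚ² and let w = (-1, 1) ∈ D. Then the quotient D/⟨2w⟩ has torsion subgroup isomorphic to ℤ/2ℤ, generated by the class of w. -/
/-- The subgroup `D = { (i, i + j) : i ∈ ℤ[1/3], j ∈ ℤ }` of `ℚ²`. -/
def Dsub : AddSubgroup (ℚ × ℚ) where
  carrier := {p | ∃ (z : ℤ) (n : ℕ) (j : ℤ), p.1 = (z : ℚ) / 3 ^ n ∧ p.2 = p.1 + j}
  zero_mem' := ⟨0, 0, 0, by norm_num, by norm_num⟩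
  add_mem' := by
    rintro ⟨x1, x2⟩ ⟨y1, y2⟩ ⟨z1, n1, j1, h1, h2⟩ ⟨z2, n2, j2, k1, k2⟩
    refine ⟨z1 * 3 ^ n2 + z2 * 3 ^ n1, n1 + n2, j1 + j2, ?_, ?_⟩
    · simp only [Prod.fst_add] at *
      push_cast
      rw [h1, k1]
      rw [div_add_div _ _ (by positivity) (by positivity)]
      push_cast
      ring_nf
    · simp only [Prod.fst_add, Prod.snd_add] at *
      rw [h2, k2]
      push_cast
      ring
  neg_mem' := by
    rintro ⟨x1, x2⟩ ⟨z, n, j, h1, h2⟩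
    refine ⟨-z, n, -j, ?_, ?_⟩
    · simp only [Prod.fst_neg] at *
      rw [h1]; push_cast; ring
    · simp only [Prod.fst_neg, Prod.snd_neg] at *
      rw [h2]; push_cast; ring

/-- The element `w = (-1, 1)` of `D` (with `i = -1 ∈ ℤ[1/3]`, `j = 2`). -/
def wD : Dsub := ⟨((-1 : ℚ), (1 : ℚ)), ⟨-1, 0, 2, by norm_num, by norm_num⟩⟩

/-- With `D = { (i, i+j) : i ∈ ℤ[1/3], j ∈ ℤ }` and `w = (-1,1)`, the quotient
`D/⟨2w⟩` has torsion subgroup isomorphic to `ℤ/2ℤ`, generated by the class of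
`w`: the class of `w` is a nonzero element of order two, and every torsion
element of the quotient is `0` or the class of `w`. -/
theorem torsion_of_quotient_by_two_w :
    ((QuotientAddGroup.mk wD : Dsub ⧸ AddSubgroup.zmultiples ((2 : ℤ) • wD)) ≠ 0) ∧
    (2 : ℤ) • (QuotientAddGroup.mk wD : Dsub ⧸ AddSubgroup.zmultiples ((2 : ℤ) • wD)) = 0 ∧
    ∀ x : Dsub ⧸ AddSubgroup.zmultiples ((2 : ℤ) • wD),
      (∃ n : ℤ, n ≠ 0 ∧ n • x = 0) →
      x = 0 ∨ x = QuotientAddGroup.mk wD := by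
  have hw_smul : ∀ a : ℤ, ((a • wD : Dsub) : ℚ × ℚ) = (-(a : ℚ), (a : ℚ)) := by
    intro a
    rw [AddSubgroup.coe_zsmul]
    show a • ((-1 : ℚ), (1 : ℚ)) = _
    rw [Prod.smul_mk]
    simp [zsmul_eq_mul]
  refine ⟨?_, ?_, ?_⟩
  · intro h
    rw [QuotientAddGroup.eq_zero_iff] at h
    obtain ⟨k, hk⟩ := h
    have hk' : ((k * 2 : ℤ) • wD : Dsub) = (1 : ℤ) • wD := by
      rw [← smul_smul, one_zsmul]; exact hk
    have := congrArg (fun d : Dsub => (d : ℚ × ℚ).2) hk'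
    simp only [hw_smul] at this
    have h2 : ((k * 2 : ℤ) : ℚ) = ((1 : ℤ) : ℚ) := this
    have : k * 2 = 1 := by exact_mod_cast h2
    omega
  · rw [← QuotientAddGroup.mk_zsmul, QuotientAddGroup.eq_zero_iff]
    exact ⟨1, one_zsmul _⟩
  · intro x hx
    obtain ⟨d, rfl⟩ := QuotientAddGroup.mk_surjective x
    obtain ⟨n, hn, hnx⟩ := hx
    rw [← QuotientAddGroup.mk_zsmul, QuotientAddGroup.eq_zero_iff] at hnx
    obtain ⟨k, hk⟩ := hnx
    have hk' : ((k * 2 : ℤ) • wD : Dsub) = n • d := by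
      rw [← smul_smul]; exact hk
    have h1 := congrArg (fun d : Dsub => (d : ℚ × ℚ).1) hk'
    have h2 := congrArg (fun d : Dsub => (d : ℚ × ℚ).2) hk'
    simp only [hw_smul, AddSubgroup.coe_zsmul, Prod.smul_fst, Prod.smul_snd] at h1 h2
    simp only [zsmul_eq_mul] at h1 h2
    -- h1 : -(↑(k*2)) = ↑n * (↑d).1,  h2 : ↑(k*2) = ↑n * (↑d).2
    have hnq : (n : ℚ) ≠ 0 := Int.cast_ne_zero.mpr hn
    have hsum : ((d : ℚ × ℚ)).2 = -((d : ℚ × ℚ)).1 := by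
      have h0 : (n : ℚ) * (((d : ℚ × ℚ)).1 + ((d : ℚ × ℚ)).2) = 0 := by
        rw [mul_add, ← h1, ← h2]; ring
      rcases mul_eq_zero.mp h0 with h | h
      · exact absurd h hnq
      · linarith
    obtain ⟨z, m, j, hd1, hd2⟩ := d.2
    have hzj : 2 * z = -j * 3 ^ m := by
      have h3 : (3 : ℚ) ^ m ≠ 0 := by positivity
      have hq : 2 * ((d : ℚ × ℚ)).1 = -(j : ℚ) := by rw [hd2] at hsum; linarith
      rw [hd1] at hq
      have : 2 * (z : ℚ) = -(j : ℚ) * 3 ^ m := by field_simp at hq; linarith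
      exact_mod_cast this
    have hdvd : (3 ^ m : ℤ) ∣ z := by
      have h2 : (3 ^ m : ℤ) ∣ 2 * z := ⟨-j, by linarith⟩
      have hcop : IsCoprime (3 ^ m : ℤ) 2 := by
        apply IsCoprime.pow_left
        norm_num [Int.isCoprime_iff_gcd_eq_one]
      exact hcop.dvd_of_dvd_mul_left h2
    obtain ⟨t, ht⟩ := hdvd
    have hd1' : ((d : ℚ × ℚ)).1 = (t : ℚ) := by
      rw [hd1, ht]
      have h3 : (3 : ℚ) ^ m ≠ 0 := by positivity
      push_cast
      field_simp
    have hdw : d = (-t) • wD := by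
      apply Subtype.ext
      rw [hw_smul]
      apply Prod.ext
      · rw [hd1']; push_cast; ring
      · rw [hsum, hd1']; push_cast; ring
    rcases Int.even_or_odd t with ⟨s, hs⟩ | ⟨s, hs⟩
    · left
      rw [QuotientAddGroup.eq_zero_iff, hdw]
      refine ⟨-s, ?_⟩
      show (-s) • ((2 : ℤ) • wD) = (-t) • wD
      rw [smul_smul]
      congr 1
      omega
    · right
      rw [QuotientAddGroup.eq_iff_sub_mem, hdw]
      refine ⟨-s - 1, ?_⟩
      have hrhs : (-t) • wD - wD = (-t - 1) • wD := by rw [sub_zsmul, one_zsmul]; abel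
      show (-s - 1) • ((2 : ℤ) • wD) = (-t) • wD - wD
      rw [hrhs, smul_smul]
      congr 1
      omega
end
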